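/- Let d ≥ 2 and N ≥ 1 be integers, let κ > 1, and let c₁ > 0. There exists a constant c₂ > 0 depending only on c₁ such that the following holds. Let W be an N×d random matrix whose columns are independent random vectors, and let z∈ℝ^d satisfy 1/2 ≤ |z| ≤ 3/2 and |z_k| ≥ c₁/√d for every coordinate k∈{1,…,d}. Then for every 0 < a < b, P( |Wz| < a and B_{κ²}(W) > b ) ≤ 2·P( B_κ(W) ≥ b/2 ) · sup_{x∈ℝ^d, 1/2≤|x|≤3/2, w∈ℝ^N} P( |Wx − w| < c₂ a ). -/

import Mathlib

open MeasureTheory ProbabilityTheory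

/-- Euclidean norm of a vector in `ℝ^m`. -/
noncomputable def euclNorm {m : ℕ} (v : Fin m → ℝ) : ℝ := Real.sqrt (∑ i, v i ^ 2)

/-- The set `Ω_κ` of admissible coefficient vectors. -/
def OmegaSet (d : ℕ) (κ : ℝ) : Set (Fin d → ℝ) :=
  {α | (∀ i, 0 ≤ α i) ∧ (∀ i, α i ≤ 1) ∧ κ ^ (-(d : ℝ)) ≤ ∏ i, α i}

/-- The refinement `B_κ(W)` of the Hilbert-Schmidt norm. -/
noncomputable def Bkap {N d : ℕ} (κ : ℝ) (W : Matrix (Fin N) (Fin d) ℝ) : ℝ :=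
  sInf {r | ∃ α ∈ OmegaSet d κ, r = ∑ i, α i ^ 2 * euclNorm (fun k => W k i) ^ 2}

open scoped NNReal ENNReal

/-! ### Auxiliary lemmas -/

lemma euclNorm_nonneg {m : ℕ} (v : Fin m → ℝ) : 0 ≤ euclNorm v := Real.sqrt_nonneg _

lemma euclNorm_sq {m : ℕ} (v : Fin m → ℝ) : euclNorm v ^ 2 = ∑ i, v i ^ 2 :=
  Real.sq_sqrt (Finset.sum_nonneg fun i _ => sq_nonneg _)

lemma euclNorm_smul {m : ℕ} (t : ℝ) (ht : 0 ≤ t) (v : Fin m → ℝ) :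
    euclNorm (t • v) = t * euclNorm v := by
  unfold euclNorm
  have : ∑ i, (t • v) i ^ 2 = t ^ 2 * ∑ i, v i ^ 2 := by
    rw [Finset.mul_sum]; refine Finset.sum_congr rfl fun i _ => by simp [mul_pow]
  rw [this, Real.sqrt_mul (sq_nonneg t), Real.sqrt_sq ht]

lemma continuous_euclNorm {m : ℕ} : Continuous (euclNorm (m := m)) :=
  Real.continuous_sqrt.comp (continuous_finset_sum _ fun i _ => (continuous_apply i).pow 2)

/-- restricted B functional on squared column norms -/
noncomputable def BJ (d : ℕ) (κ : ℝ) (J : Finset (Fin d)) (n : Fin d → ℝ) : ℝ :=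
  sInf {r | ∃ α : Fin d → ℝ, (∀ i, 0 ≤ α i) ∧ (∀ i, α i ≤ 1) ∧
    κ ^ (-(d : ℝ)) ≤ ∏ i ∈ J, α i ∧ r = ∑ i ∈ J, α i ^ 2 * n i}

lemma BJ_set_nonempty {d : ℕ} {κ : ℝ} (hκ : 1 ≤ κ) (J : Finset (Fin d)) (n : Fin d → ℝ) :
    {r | ∃ α : Fin d → ℝ, (∀ i, 0 ≤ α i) ∧ (∀ i, α i ≤ 1) ∧
      κ ^ (-(d : ℝ)) ≤ ∏ i ∈ J, α i ∧ r = ∑ i ∈ J, α i ^ 2 * n i}.Nonempty := by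
  refine ⟨∑ i ∈ J, n i, fun _ => 1, fun i => zero_le_one, fun i => le_refl 1, ?_, by simp⟩
  simpa using Real.rpow_le_one_of_one_le_of_nonpos hκ (neg_nonpos.mpr (Nat.cast_nonneg d))

lemma BJ_set_bddBelow {d : ℕ} {κ : ℝ} (J : Finset (Fin d)) (n : Fin d → ℝ) :
    BddBelow {r | ∃ α : Fin d → ℝ, (∀ i, 0 ≤ α i) ∧ (∀ i, α i ≤ 1) ∧
      κ ^ (-(d : ℝ)) ≤ ∏ i ∈ J, α i ∧ r = ∑ i ∈ J, α i ^ 2 * n i} := by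
  refine ⟨-∑ i ∈ J, |n i|, ?_⟩
  rintro r ⟨α, h0, h1, -, rfl⟩
  rw [← Finset.sum_neg_distrib]
  refine Finset.sum_le_sum fun i _ => ?_
  have h2 : α i ^ 2 ≤ 1 := by
    have := h0 i; have := h1 i; nlinarith
  calc -|n i| ≤ α i ^ 2 * (-|n i|) := by nlinarith [abs_nonneg (n i), sq_nonneg (α i)]
    _ ≤ α i ^ 2 * n i := by
        have := neg_abs_le (n i); nlinarith [sq_nonneg (α i)]

lemma BJ_le_add {d : ℕ} {κ : ℝ} (hκ : 1 ≤ κ) (J : Finset (Fin d)) (n n' : Fin d → ℝ) :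
    BJ d κ J n ≤ BJ d κ J n' + ∑ i ∈ J, |n i - n' i| := by
  rw [BJ, ← sub_le_iff_le_add]
  refine le_csInf (BJ_set_nonempty hκ J n') ?_
  rintro r ⟨α, h0, h1, hp, rfl⟩
  rw [sub_le_iff_le_add]
  refine csInf_le_of_le (BJ_set_bddBelow J n) ⟨α, h0, h1, hp, rfl⟩ ?_
  have : ∑ i ∈ J, α i ^ 2 * n i ≤ ∑ i ∈ J, (α i ^ 2 * n' i + |n i - n' i|) := by
    refine Finset.sum_le_sum fun i _ => ?_
    have h2 : α i ^ 2 ≤ 1 := by have := h0 i; have := h1 i; nlinarith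
    have h3 : α i ^ 2 * (n i - n' i) ≤ |n i - n' i| := by
      calc α i ^ 2 * (n i - n' i) ≤ α i ^ 2 * |n i - n' i| := by
            nlinarith [le_abs_self (n i - n' i), sq_nonneg (α i)]
        _ ≤ |n i - n' i| := by nlinarith [abs_nonneg (n i - n' i)]
    nlinarith
  rw [Finset.sum_add_distrib] at this
  linarith

lemma abs_BJ_sub {d : ℕ} {κ : ℝ} (hκ : 1 ≤ κ) (J : Finset (Fin d)) (n n' : Fin d → ℝ) :
    |BJ d κ J n - BJ d κ J n'| ≤ ∑ i ∈ J, |n i - n' i| := by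
  rw [abs_sub_le_iff]
  constructor
  · linarith [BJ_le_add hκ J n n']
  · have := BJ_le_add hκ J n' n
    have h : ∑ i ∈ J, |n' i - n i| = ∑ i ∈ J, |n i - n' i| :=
      Finset.sum_congr rfl fun i _ => abs_sub_comm _ _
    linarith [h ▸ this]

lemma lipschitz_BJ {d : ℕ} {κ : ℝ} (hκ : 1 ≤ κ) (J : Finset (Fin d)) :
    LipschitzWith (d : ℝ≥0) (BJ d κ J) := by
  refine LipschitzWith.of_dist_le_mul fun n n' => ?_
  rw [Real.dist_eq]
  calc |BJ d κ J n - BJ d κ J n'| ≤ ∑ i ∈ J, |n i - n' i| := abs_BJ_sub hκ J n n'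
    _ ≤ ∑ i ∈ J, dist n n' := Finset.sum_le_sum fun i _ => by
        rw [← Real.dist_eq]; exact dist_le_pi_dist n n' i
    _ = J.card * dist n n' := by rw [Finset.sum_const, nsmul_eq_mul]
    _ ≤ d * dist n n' := by
        have : (J.card : ℝ) ≤ d := by
          exact_mod_cast le_trans (Finset.card_le_card (Finset.subset_univ J)) (by simp)
        nlinarith [dist_nonneg (x := n) (y := n')]

lemma BJ_congr {d : ℕ} (κ : ℝ) (J : Finset (Fin d)) {n n' : Fin d → ℝ}
    (h : ∀ i ∈ J, n i = n' i) : BJ d κ J n = BJ d κ J n' := by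
  unfold BJ
  congr 1
  ext r
  constructor <;> rintro ⟨α, h0, h1, hp, rfl⟩ <;>
    exact ⟨α, h0, h1, hp, Finset.sum_congr rfl fun i hi => by rw [h i hi]⟩

lemma split_lemma {d : ℕ} (hd : 2 ≤ d) {c₁ : ℝ} (hc₁ : 0 < c₁) (z : Fin d → ℝ)
    (hz1 : 1 / 2 ≤ euclNorm z) (hzk : ∀ k, c₁ / Real.sqrt d ≤ |z k|) :
    ∃ J : Finset (Fin d),
      min (1/16) (c₁ ^ 2 / 2) ≤ ∑ i ∈ J, z i ^ 2 ∧
      min (1/16) (c₁ ^ 2 / 2) ≤ ∑ i ∈ Jᶜ, z i ^ 2 := by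
  classical
  set m := min (1/16 : ℝ) (c₁ ^ 2 / 2) with hm
  have hd0 : (0 : ℝ) < d := by positivity
  have htot : (1/4 : ℝ) ≤ ∑ i, z i ^ 2 := by
    have := euclNorm_sq z
    nlinarith [hz1]
  have hcoord : ∀ i, c₁ ^ 2 / d ≤ z i ^ 2 := by
    intro i
    have h1 : c₁ / Real.sqrt d ≤ |z i| := hzk i
    have h2 : (c₁ / Real.sqrt d) ^ 2 = c₁ ^ 2 / d := by
      rw [div_pow, Real.sq_sqrt (le_of_lt hd0)]
    calc c₁ ^ 2 / d = (c₁ / Real.sqrt d) ^ 2 := h2.symm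
      _ ≤ |z i| ^ 2 := by
          refine pow_le_pow_left₀ ?_ h1 2
          positivity
      _ = z i ^ 2 := sq_abs _
  have hcpos : ∀ i, 0 < z i ^ 2 := fun i => lt_of_lt_of_le (by positivity) (hcoord i)
  -- minimize sum over subsets with sum ≥ 1/16
  set s : Finset (Finset (Fin d)) :=
    Finset.univ.filter (fun T => 1/16 ≤ ∑ i ∈ T, z i ^ 2) with hs
  have hsne : s.Nonempty := ⟨Finset.univ, by simp [hs]; linarith⟩
  obtain ⟨J, hJs, hJmin⟩ := Finset.exists_min_image s (fun T => ∑ i ∈ T, z i ^ 2) hsne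
  have hJ16 : 1/16 ≤ ∑ i ∈ J, z i ^ 2 := by
    simpa [hs] using hJs
  have hJne : J.Nonempty := by
    rcases Finset.eq_empty_or_nonempty J with h | h
    · exfalso; rw [h] at hJ16; simp at hJ16; linarith
    · exact h
  obtain ⟨j, hj⟩ := hJne
  have hsplit : ∑ i ∈ J, z i ^ 2 = z j ^ 2 + ∑ i ∈ J.erase j, z i ^ 2 :=
    (Finset.add_sum_erase J _ hj).symm
  have herase : ∑ i ∈ J.erase j, z i ^ 2 < 1/16 := by
    by_contra hcon
    push_neg at hcon
    have hmem : J.erase j ∈ s := by simp only [hs, Finset.mem_filter, Finset.mem_univ, true_and]; linarith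
    have := hJmin _ hmem
    nlinarith [hcpos j]
  have hcompl : ∑ i ∈ Jᶜ, z i ^ 2 = (∑ i, z i ^ 2) - ∑ i ∈ J, z i ^ 2 := by
    have := Finset.sum_add_sum_compl J (fun i => z i ^ 2)
    linarith
  have hm16 : m ≤ 1/16 := min_le_left _ _
  have hmc : m ≤ c₁ ^ 2 / 2 := min_le_right _ _
  by_cases hbig : z j ^ 2 < 1/16
  · -- sum J < 1/8, complement ≥ 1/8
    refine ⟨J, le_trans hm16 hJ16, ?_⟩
    have : ∑ i ∈ J, z i ^ 2 < 1/8 := by linarith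
    rw [hcompl]; linarith
  · push_neg at hbig
    -- J = {j}
    have hjs : ({j} : Finset (Fin d)) ∈ s := by simp only [hs, Finset.mem_filter, Finset.mem_univ, true_and, Finset.sum_singleton]; linarith
    have hle : ∑ i ∈ J, z i ^ 2 ≤ z j ^ 2 := by simpa using hJmin _ hjs
    have hzero : ∑ i ∈ J.erase j, z i ^ 2 ≤ 0 := by linarith
    have herase_empty : J.erase j = ∅ := by
      by_contra hne
      obtain ⟨i, hi⟩ := Finset.nonempty_iff_ne_empty.mpr hne
      have h1 : z i ^ 2 ≤ ∑ i ∈ J.erase j, z i ^ 2 :=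
        Finset.single_le_sum (fun i _ => le_of_lt (hcpos i)) hi
      nlinarith [hcpos i]
    have hJj : J = {j} := by
      have := Finset.insert_erase hj
      rw [herase_empty] at this
      simpa using this.symm
    refine ⟨J, le_trans hm16 hJ16, ?_⟩
    rw [hJj]
    have hcard : (({j} : Finset (Fin d))ᶜ).card = d - 1 := by
      rw [Finset.card_compl]; simp
    have hlb : ∀ i ∈ ({j} : Finset (Fin d))ᶜ, c₁ ^ 2 / d ≤ z i ^ 2 := fun i _ => hcoord i
    have hsum : (({j} : Finset (Fin d))ᶜ).card • (c₁ ^ 2 / d) ≤ ∑ i ∈ ({j} : Finset (Fin d))ᶜ, z i ^ 2 :=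
      Finset.card_nsmul_le_sum _ _ _ hlb
    rw [hcard, nsmul_eq_mul] at hsum
    have hd1 : (1 : ℝ) ≤ (d - 1 : ℕ) := by
      have : 1 ≤ d - 1 := by omega
      exact_mod_cast this
    have hdd : ((d - 1 : ℕ) : ℝ) = (d : ℝ) - 1 := by
      have : 1 ≤ d := by omega
      push_cast [Nat.cast_sub this]; ring
    have hfrac : c₁ ^ 2 / 2 ≤ ((d-1 : ℕ) : ℝ) * (c₁ ^ 2 / d) := by
      rw [hdd]
      have h2d : (2 : ℝ) ≤ d := by exact_mod_cast hd
      rw [div_le_iff₀ (by norm_num : (0:ℝ) < 2)]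
      have key : ((d:ℝ) - 1) * (c₁ ^ 2 / d) * 2 = c₁ ^ 2 * (2 * (d - 1) / d) := by ring
      rw [key]
      have h1 : (1:ℝ) ≤ 2 * ((d:ℝ) - 1) / d := by
        rw [le_div_iff₀ hd0]; linarith
      nlinarith [sq_nonneg c₁]
    linarith

section L
variable {N d : ℕ} {κ : ℝ}

lemma norm_col_sq_nonneg (W : Matrix (Fin N) (Fin d) ℝ) (i : Fin d) :
    0 ≤ euclNorm (fun k => W k i) ^ 2 := sq_nonneg _

lemma Bkap_set_nonempty (hκ : 1 ≤ κ) (W : Matrix (Fin N) (Fin d) ℝ) :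
    {r | ∃ α ∈ OmegaSet d κ, r = ∑ i, α i ^ 2 * euclNorm (fun k => W k i) ^ 2}.Nonempty := by
  refine ⟨∑ i, euclNorm (fun k => W k i) ^ 2, fun _ => 1, ⟨fun i => zero_le_one,
    fun i => le_refl 1, ?_⟩, by simp⟩
  simpa using Real.rpow_le_one_of_one_le_of_nonpos hκ (neg_nonpos.mpr (Nat.cast_nonneg d))

lemma Bkap_set_bddBelow (W : Matrix (Fin N) (Fin d) ℝ) :
    BddBelow {r | ∃ α ∈ OmegaSet d κ, r = ∑ i, α i ^ 2 * euclNorm (fun k => W k i) ^ 2} := by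
  refine ⟨0, ?_⟩
  rintro r ⟨α, hα, rfl⟩
  exact Finset.sum_nonneg fun i _ => mul_nonneg (sq_nonneg _) (norm_col_sq_nonneg W i)

/-- L2 : `BJ` from below bounds `Bkap`. -/
lemma BJ_le_Bkap (hκ : 1 ≤ κ) (J : Finset (Fin d)) (W : Matrix (Fin N) (Fin d) ℝ) :
    BJ d κ J (fun i => euclNorm (fun k => W k i) ^ 2) ≤ Bkap κ W := by
  refine le_csInf (Bkap_set_nonempty hκ W) ?_
  rintro r ⟨α, ⟨h0, h1, hp⟩, rfl⟩
  have hprodJ : κ ^ (-(d : ℝ)) ≤ ∏ i ∈ J, α i := by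
    refine le_trans hp ?_
    have h2 : (∏ i ∈ J, α i) * ∏ i ∈ Jᶜ, α i = ∏ i, α i := Finset.prod_mul_prod_compl J α
    have h3 : ∏ i ∈ Jᶜ, α i ≤ 1 := Finset.prod_le_one (fun i _ => h0 i) (fun i _ => h1 i)
    have h4 : 0 ≤ ∏ i ∈ J, α i := Finset.prod_nonneg fun i _ => h0 i
    nlinarith
  calc BJ d κ J (fun i => euclNorm (fun k => W k i) ^ 2)
      ≤ ∑ i ∈ J, α i ^ 2 * euclNorm (fun k => W k i) ^ 2 :=
        csInf_le (BJ_set_bddBelow J _) ⟨α, h0, h1, hprodJ, rfl⟩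
    _ ≤ ∑ i, α i ^ 2 * euclNorm (fun k => W k i) ^ 2 :=
        Finset.sum_le_sum_of_subset_of_nonneg (Finset.subset_univ J)
          (fun i _ _ => mul_nonneg (sq_nonneg _) (norm_col_sq_nonneg W i))

/-- L1 : if `Bkap κ²` is large then one of the two restricted functionals is large. -/
lemma BJ_dichotomy (hκ : 1 < κ) (J : Finset (Fin d)) (W : Matrix (Fin N) (Fin d) ℝ)
    {b : ℝ} (hb : b < Bkap (κ ^ 2) W) :
    b / 2 ≤ BJ d κ J (fun i => euclNorm (fun k => W k i) ^ 2) ∨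
    b / 2 ≤ BJ d κ Jᶜ (fun i => euclNorm (fun k => W k i) ^ 2) := by
  set n : Fin d → ℝ := fun i => euclNorm (fun k => W k i) ^ 2 with hn
  by_contra hcon
  push_neg at hcon
  obtain ⟨hJ, hJc⟩ := hcon
  have hκ0 : (0 : ℝ) < κ := lt_trans one_pos hκ
  obtain ⟨r₁, ⟨α₁, h10, h11, h1p, rfl⟩, hr₁⟩ :=
    exists_lt_of_csInf_lt (BJ_set_nonempty (le_of_lt hκ) J n) hJ
  obtain ⟨r₂, ⟨α₂, h20, h21, h2p, rfl⟩, hr₂⟩ :=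
    exists_lt_of_csInf_lt (BJ_set_nonempty (le_of_lt hκ) Jᶜ n) hJc
  classical
  set α : Fin d → ℝ := fun i => if i ∈ J then α₁ i else α₂ i with hα
  have hmem : α ∈ OmegaSet d (κ ^ 2) := by
    refine ⟨fun i => ?_, fun i => ?_, ?_⟩
    · by_cases h : i ∈ J <;> simp [hα, h, h10 i, h20 i]
    · by_cases h : i ∈ J <;> simp [hα, h, h11 i, h21 i]
    · have hsplit : ∏ i, α i = (∏ i ∈ J, α₁ i) * ∏ i ∈ Jᶜ, α₂ i := by
        rw [← Finset.prod_mul_prod_compl J α]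
        congr 1
        · exact Finset.prod_congr rfl fun i hi => by simp [hα, hi]
        · exact Finset.prod_congr rfl fun i hi => by
            simp [hα, (Finset.mem_compl.mp hi)]
      have hexp : (κ ^ 2 : ℝ) ^ (-(d : ℝ)) = κ ^ (-(d : ℝ)) * κ ^ (-(d : ℝ)) := by
        rw [sq, Real.mul_rpow (le_of_lt hκ0) (le_of_lt hκ0)]
      rw [hsplit, hexp]
      have hnn : (0 : ℝ) ≤ κ ^ (-(d : ℝ)) := Real.rpow_nonneg (le_of_lt hκ0) _
      exact mul_le_mul h1p h2p hnn (le_trans hnn h1p)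
  have hval : ∑ i, α i ^ 2 * n i
      = (∑ i ∈ J, α₁ i ^ 2 * n i) + ∑ i ∈ Jᶜ, α₂ i ^ 2 * n i := by
    rw [← Finset.sum_add_sum_compl J (fun i => α i ^ 2 * n i)]
    congr 1
    · exact Finset.sum_congr rfl fun i hi => by simp [hα, hi]
    · exact Finset.sum_congr rfl fun i hi => by simp [hα, (Finset.mem_compl.mp hi)]
  have hBle : Bkap (κ ^ 2) W ≤ ∑ i, α i ^ 2 * n i :=
    csInf_le (Bkap_set_bddBelow W) ⟨α, hmem, rfl⟩
  rw [hval] at hBle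
  linarith

end L

lemma core_decoupling {Ω : Type} [MeasureSpace Ω] [IsProbabilityMeasure (ℙ : Measure Ω)]
    {E : Type*} [MeasurableSpace E] {N : ℕ} (X Y : Ω → E) (hX : Measurable X)
    (hY : Measurable Y) (hindep : IndepFun X Y ℙ) (f g : E → Fin N → ℝ)
    (hf : Measurable f) (hg : Measurable g) (F : Set E) (hF : MeasurableSet F) (a S : ℝ)
    (hbound : ∀ w : Fin N → ℝ, ℙ {ω | euclNorm (g (Y ω) - w) < a} ≤ ENNReal.ofReal S) :
    ℙ {ω | euclNorm (f (X ω) + g (Y ω)) < a ∧ X ω ∈ F} ≤ ENNReal.ofReal S * ℙ (X ⁻¹' F) := by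
  haveI : IsProbabilityMeasure (Measure.map Y ℙ) := Measure.isProbabilityMeasure_map hY.aemeasurable
  set C : Set (E × E) := {p | euclNorm (f p.1 + g p.2) < a ∧ p.1 ∈ F} with hCdef
  have hC : MeasurableSet C := by
    refine MeasurableSet.inter ?_ (measurable_fst hF)
    exact measurableSet_lt
      (continuous_euclNorm.measurable.comp ((hf.comp measurable_fst).add (hg.comp measurable_snd)))
      measurable_const
  have hev : {ω | euclNorm (f (X ω) + g (Y ω)) < a ∧ X ω ∈ F}
      = (fun ω => (X ω, Y ω)) ⁻¹' C := rfl
  have hmap : Measure.map (fun ω => (X ω, Y ω)) ℙ = (Measure.map X ℙ).prod (Measure.map Y ℙ) :=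
    (indepFun_iff_map_prod_eq_prod_map_map hX.aemeasurable hY.aemeasurable).mp hindep
  rw [hev, ← Measure.map_apply (hX.prodMk hY) hC, hmap, Measure.prod_apply hC]
  have hslice : ∀ x : E, (Measure.map Y ℙ) (Prod.mk x ⁻¹' C)
      ≤ F.indicator (fun _ => ENNReal.ofReal S) x := by
    intro x
    by_cases hx : x ∈ F
    · have hset : Prod.mk x ⁻¹' C = {y | euclNorm (f x + g y) < a} := by
        ext y; simp [hCdef, hx]
      have hmeas : MeasurableSet {y : E | euclNorm (f x + g y) < a} :=
        measurableSet_lt (continuous_euclNorm.measurable.comp ((measurable_const).add hg))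
          measurable_const
      rw [hset, Measure.map_apply hY hmeas, Set.indicator_of_mem hx]
      have : Y ⁻¹' {y : E | euclNorm (f x + g y) < a}
          = {ω | euclNorm (g (Y ω) - (-(f x))) < a} := by
        ext ω; simp [sub_neg_eq_add, add_comm]
      rw [this]
      exact hbound _
    · have hset : Prod.mk x ⁻¹' C = ∅ := by
        ext y; simp [hCdef, hx]
      rw [hset]
      simp
  calc ∫⁻ x, (Measure.map Y ℙ) (Prod.mk x ⁻¹' C) ∂(Measure.map X ℙ)
      ≤ ∫⁻ x, F.indicator (fun _ => ENNReal.ofReal S) x ∂(Measure.map X ℙ) :=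
        lintegral_mono hslice
    _ = ENNReal.ofReal S * (Measure.map X ℙ) F := by
        rw [lintegral_indicator hF]
        simp [mul_comm]
    _ = ENNReal.ofReal S * ℙ (X ⁻¹' F) := by rw [Measure.map_apply hX hF]

lemma free_bound {N d : ℕ} {Ω : Type} [MeasureSpace Ω] (W : Ω → Matrix (Fin N) (Fin d) ℝ)
    (z : Fin d → ℝ) (T : Finset (Fin d)) {m a c₂ S : ℝ} (hm : 0 < m)
    (hmass : m ≤ ∑ i ∈ T, z i ^ 2) (hz3 : euclNorm z ≤ 3/2) (ha : 0 < a)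
    (hc₂ : c₂ = max 1 ((1/2) / Real.sqrt m))
    (hsup : ∀ (x : Fin d → ℝ) (w : Fin N → ℝ), 1/2 ≤ euclNorm x → euclNorm x ≤ 3/2 →
        ℙ {ω | euclNorm ((W ω).mulVec x - w) < c₂ * a} ≤ ENNReal.ofReal S)
    (w : Fin N → ℝ) :
    ℙ {ω | euclNorm ((W ω).mulVec (fun i => if i ∈ T then z i else 0) - w) < a}
      ≤ ENNReal.ofReal S := by
  classical
  set zc : Fin d → ℝ := fun i => if i ∈ T then z i else 0 with hzc
  have hsumzc : ∑ i, zc i ^ 2 = ∑ i ∈ T, z i ^ 2 := by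
    rw [← Finset.sum_filter_add_sum_filter_not Finset.univ (fun i => i ∈ T) (fun i => zc i ^ 2)]
    have h1 : ∑ i ∈ Finset.univ.filter (· ∈ T), zc i ^ 2 = ∑ i ∈ T, z i ^ 2 := by
      rw [Finset.filter_mem_eq_inter, Finset.univ_inter]
      exact Finset.sum_congr rfl fun i hi => by simp [hzc, hi]
    have h2 : ∑ i ∈ Finset.univ.filter (¬ · ∈ T), zc i ^ 2 = 0 := by
      refine Finset.sum_eq_zero fun i hi => ?_
      have := (Finset.mem_filter.mp hi).2
      simp [hzc, this]
    rw [h1, h2, add_zero]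
  set nm := euclNorm zc with hnm
  have hnm_lb : Real.sqrt m ≤ nm := by
    rw [hnm]
    unfold euclNorm
    exact Real.sqrt_le_sqrt (by rw [hsumzc]; exact hmass)
  have hnm_pos : 0 < nm := lt_of_lt_of_le (Real.sqrt_pos.mpr hm) hnm_lb
  have hnm_ub : nm ≤ 3/2 := by
    refine le_trans ?_ hz3
    unfold euclNorm
    refine Real.sqrt_le_sqrt (Finset.sum_le_sum fun i _ => ?_)
    by_cases hi : i ∈ T <;> simp [hzc, hi, sq_nonneg]
  set t : ℝ := max 1 ((1/2) / nm) with htdef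
  have ht1 : (1 : ℝ) ≤ t := le_max_left _ _
  have ht0 : (0 : ℝ) < t := lt_of_lt_of_le one_pos ht1
  have htc : t ≤ c₂ := by
    rw [hc₂, htdef]
    exact max_le_max (le_refl 1) (div_le_div_of_nonneg_left (by norm_num)
      (Real.sqrt_pos.mpr hm) hnm_lb)
  set xv : Fin d → ℝ := t • zc with hxv
  have hxv_norm : euclNorm xv = t * nm := euclNorm_smul t (le_of_lt ht0) zc
  have hxv_lb : 1/2 ≤ euclNorm xv := by
    rw [hxv_norm]
    rcases max_cases 1 ((1/2) / nm) with ⟨he, hle⟩ | ⟨he, hle⟩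
    · rw [htdef, he, one_mul]
      rw [div_le_one hnm_pos] at hle
      exact hle
    · rw [htdef, he, div_mul_cancel₀ _ (ne_of_gt hnm_pos)]
  have hxv_ub : euclNorm xv ≤ 3/2 := by
    rw [hxv_norm]
    rcases max_cases 1 ((1/2) / nm) with ⟨he, hle⟩ | ⟨he, hle⟩
    · rw [htdef, he, one_mul]; exact hnm_ub
    · rw [htdef, he, div_mul_cancel₀ _ (ne_of_gt hnm_pos)]; norm_num
  refine le_trans (measure_mono ?_) (hsup xv (t • w) hxv_lb hxv_ub)
  intro ω hω
  simp only [Set.mem_setOf_eq] at hω ⊢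
  have h1 : (W ω).mulVec xv - t • w = t • ((W ω).mulVec zc - w) := by
    rw [hxv, Matrix.mulVec_smul, smul_sub]
  rw [h1, euclNorm_smul t (le_of_lt ht0)]
  calc t * euclNorm ((W ω).mulVec zc - w) < t * a := by
        exact (mul_lt_mul_iff_right₀ ht0).mpr hω
    _ ≤ c₂ * a := mul_le_mul_of_nonneg_right htc (le_of_lt ha)

/-- decoupling. -/
theorem decoupling_lemma (c₁ : ℝ) (hc₁ : 0 < c₁) :
    ∃ c₂ : ℝ, 0 < c₂ ∧
    ∀ (d N : ℕ), 2 ≤ d → 1 ≤ N →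
    ∀ (κ : ℝ), 1 < κ →
    ∀ (Ω : Type) [MeasureSpace Ω] [IsProbabilityMeasure (ℙ : Measure Ω)]
      (W : Ω → Matrix (Fin N) (Fin d) ℝ),
      (∀ i j, Measurable fun ω => W ω i j) →
      -- the columns are independent random vectors
      iIndepFun (fun i : Fin d => fun ω => fun k => W ω k i) ℙ →
      ∀ z : Fin d → ℝ,
        1 / 2 ≤ euclNorm z → euclNorm z ≤ 3 / 2 →
        (∀ k, c₁ / Real.sqrt d ≤ |z k|) →
        ∀ a b : ℝ, 0 < a → a < b →
          (ℙ {ω | euclNorm ((W ω).mulVec z) < a ∧ b < Bkap (κ ^ 2) (W ω)}).toReal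
            ≤ 2 * (ℙ {ω | b / 2 ≤ Bkap κ (W ω)}).toReal *
              sSup {r : ℝ | ∃ (x : Fin d → ℝ) (w : Fin N → ℝ),
                1 / 2 ≤ euclNorm x ∧ euclNorm x ≤ 3 / 2 ∧
                r = (ℙ {ω | euclNorm ((W ω).mulVec x - w) < c₂ * a}).toReal} := by
  classical
  set m : ℝ := min (1/16) (c₁ ^ 2 / 2) with hmdef
  have hm : 0 < m := lt_min (by norm_num) (by positivity)
  refine ⟨max 1 ((1/2) / Real.sqrt m), lt_of_lt_of_le one_pos (le_max_left _ _), ?_⟩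
  set c₂ : ℝ := max 1 ((1/2) / Real.sqrt m) with hc₂def
  intro d N hd hN κ hκ Ω _ _ W hWmeas hindep z hz1 hz3 hzk a b ha hab
  have hκ1 : (1 : ℝ) ≤ κ := le_of_lt hκ
  obtain ⟨J, hJm, hJcm⟩ := split_lemma hd hc₁ z hz1 hzk
  -- column random variables
  set col : Fin d → Ω → (Fin N → ℝ) := fun i ω k => W ω k i with hcol
  have hcolmeas : ∀ i, Measurable (col i) :=
    fun i => measurable_pi_lambda _ fun k => hWmeas k i
  -- grouped variables
  set XT : Finset (Fin d) → Ω → (Fin d → Fin N → ℝ) :=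
    fun T ω i => if i ∈ T then col i ω else 0 with hXT
  have hXTmeas : ∀ T, Measurable (XT T) := by
    intro T
    refine measurable_pi_lambda _ fun i => ?_
    by_cases hi : i ∈ T
    · simpa [hXT, hi] using hcolmeas i
    · simpa [hXT, hi] using (measurable_const : Measurable fun _ : Ω => (0 : Fin N → ℝ))
  -- independence of the two groups
  have hXY : IndepFun (XT J) (XT Jᶜ) ℙ := by
    have hbase := hindep.indepFun_finset J Jᶜ disjoint_compl_right hcolmeas
    set φ : (T : Finset (Fin d)) → ({i // i ∈ T} → (Fin N → ℝ)) → (Fin d → Fin N → ℝ) :=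
      fun T t i => if h : i ∈ T then t ⟨i, h⟩ else 0 with hφ
    have hφmeas : ∀ T, Measurable (φ T) := by
      intro T
      refine measurable_pi_lambda _ fun i => ?_
      by_cases hi : i ∈ T
      · simpa [hφ, hi] using measurable_pi_apply (⟨i, hi⟩ : {j // j ∈ T})
      · simpa [hφ, hi] using
          (measurable_const : Measurable fun _ : ({j // j ∈ T} → (Fin N → ℝ)) =>
            (0 : Fin N → ℝ))
    have hcompJ : (φ J) ∘ (fun ω (i : {j // j ∈ J}) => col i ω) = XT J := by
      funext ω; funext i
      by_cases hi : i ∈ J <;> simp [hφ, hXT, Function.comp, hi]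
    have hcompJc : (φ Jᶜ) ∘ (fun ω (i : {j // j ∈ Jᶜ}) => col i ω) = XT Jᶜ := by
      funext ω; funext i
      by_cases hi : i ∈ Jᶜ <;> simp [hφ, hXT, Function.comp, hi]
    have := hbase.comp (hφmeas J) (hφmeas Jᶜ)
    rwa [hcompJ, hcompJc] at this
  -- linear functional
  set fz : (Fin d → Fin N → ℝ) → (Fin N → ℝ) := fun v k => ∑ i, z i * v i k with hfz
  have hfzmeas : Measurable fz := by
    refine measurable_pi_lambda _ fun k => ?_
    refine Finset.measurable_sum _ fun i _ => ?_
    have hm1 : Measurable fun v : Fin d → Fin N → ℝ => v i k :=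
      (measurable_pi_apply k).comp (measurable_pi_apply i)
    exact hm1.const_mul (z i)
  -- sum identities
  have hsum_split : ∀ ω, fz (XT J ω) + fz (XT Jᶜ ω) = (W ω).mulVec z := by
    intro ω
    funext k
    simp only [hfz, Pi.add_apply, Matrix.mulVec, dotProduct, hXT]
    rw [← Finset.sum_add_distrib]
    refine Finset.sum_congr rfl fun i _ => ?_
    by_cases hi : i ∈ J <;> simp [hi, Pi.zero_apply] <;> ring
  have hfree : ∀ (T : Finset (Fin d)) ω,
      fz (XT T ω) = (W ω).mulVec (fun i => if i ∈ T then z i else 0) := by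
    intro T ω
    funext k
    simp only [hfz, Matrix.mulVec, dotProduct, hXT]
    refine Finset.sum_congr rfl fun i _ => ?_
    by_cases hi : i ∈ T <;> simp [hi] <;> ring
  -- the F sets
  set FT : Finset (Fin d) → Set (Fin d → Fin N → ℝ) :=
    fun T => {v | b / 2 ≤ BJ d κ T (fun i => euclNorm (v i) ^ 2)} with hFT
  have hFTmeas : ∀ T, MeasurableSet (FT T) := by
    intro T
    have h1 : Measurable fun v : Fin d → Fin N → ℝ => fun i => euclNorm (v i) ^ 2 :=
      measurable_pi_lambda _ fun i =>
        ((continuous_euclNorm.measurable.comp (measurable_pi_apply i)).pow_const 2)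
    exact measurableSet_le measurable_const ((lipschitz_BJ hκ1 T).continuous.measurable.comp h1)
  -- sup set facts
  set SupSet : Set ℝ := {r : ℝ | ∃ (x : Fin d → ℝ) (w : Fin N → ℝ),
      1 / 2 ≤ euclNorm x ∧ euclNorm x ≤ 3 / 2 ∧
      r = (ℙ {ω | euclNorm ((W ω).mulVec x - w) < c₂ * a}).toReal} with hSupSet
  set S : ℝ := sSup SupSet with hS
  have hbdd : BddAbove SupSet := by
    refine ⟨1, ?_⟩
    rintro r ⟨x, w, -, -, rfl⟩
    exact ENNReal.toReal_le_of_le_ofReal one_pos.le (by simpa using prob_le_one)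
  have hSmem : ∀ (x : Fin d → ℝ) (w : Fin N → ℝ), 1/2 ≤ euclNorm x → euclNorm x ≤ 3/2 →
      ℙ {ω | euclNorm ((W ω).mulVec x - w) < c₂ * a} ≤ ENNReal.ofReal S := by
    intro x w hx1 hx2
    rw [ENNReal.le_ofReal_iff_toReal_le (measure_ne_top _ _) ?_]
    · exact le_csSup hbdd ⟨x, w, hx1, hx2, rfl⟩
    · refine le_csSup_of_le hbdd ⟨z, 0, hz1, hz3, rfl⟩ ENNReal.toReal_nonneg
  have hS0 : 0 ≤ S := le_csSup_of_le hbdd ⟨z, 0, hz1, hz3, rfl⟩ ENNReal.toReal_nonneg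
  -- free bounds
  have hboundJc : ∀ w : Fin N → ℝ, ℙ {ω | euclNorm (fz (XT Jᶜ ω) - w) < a}
      ≤ ENNReal.ofReal S := by
    intro w
    have h := free_bound W z Jᶜ hm hJcm hz3 ha hc₂def hSmem w
    simpa only [hfree Jᶜ] using h
  have hboundJ : ∀ w : Fin N → ℝ, ℙ {ω | euclNorm (fz (XT J ω) - w) < a}
      ≤ ENNReal.ofReal S := by
    intro w
    have h := free_bound W z J hm hJm hz3 ha hc₂def hSmem w
    simpa only [hfree J] using h
  -- congruence between FT membership and BJ of columns
  have hFTiff : ∀ (T : Finset (Fin d)) ω, (XT T ω ∈ FT T ↔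
      b / 2 ≤ BJ d κ T (fun i => euclNorm (fun k => W ω k i) ^ 2)) := by
    intro T ω
    have : BJ d κ T (fun i => euclNorm (XT T ω i) ^ 2)
        = BJ d κ T (fun i => euclNorm (fun k => W ω k i) ^ 2) := by
      refine BJ_congr κ T fun i hi => ?_
      simp [hXT, hi, hcol]
    simp only [hFT, Set.mem_setOf_eq, this]
  -- event inclusion
  have hincl : {ω | euclNorm ((W ω).mulVec z) < a ∧ b < Bkap (κ ^ 2) (W ω)}
      ⊆ {ω | euclNorm (fz (XT J ω) + fz (XT Jᶜ ω)) < a ∧ XT J ω ∈ FT J}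
        ∪ {ω | euclNorm (fz (XT Jᶜ ω) + fz (XT J ω)) < a ∧ XT Jᶜ ω ∈ FT Jᶜ} := by
    intro ω hω
    obtain ⟨hω1, hω2⟩ := hω
    have hnorm : euclNorm (fz (XT J ω) + fz (XT Jᶜ ω)) < a := by
      rw [hsum_split ω]; exact hω1
    rcases BJ_dichotomy hκ J (W ω) hω2 with h | h
    · exact Or.inl ⟨hnorm, (hFTiff J ω).mpr h⟩
    · refine Or.inr ⟨?_, (hFTiff Jᶜ ω).mpr h⟩
      rwa [add_comm]
  -- apply core decoupling twice
  have hcore1 : ℙ {ω | euclNorm (fz (XT J ω) + fz (XT Jᶜ ω)) < a ∧ XT J ω ∈ FT J}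
      ≤ ENNReal.ofReal S * ℙ (XT J ⁻¹' FT J) :=
    core_decoupling (XT J) (XT Jᶜ) (hXTmeas J) (hXTmeas Jᶜ) hXY fz fz hfzmeas hfzmeas
      (FT J) (hFTmeas J) a S hboundJc
  have hcore2 : ℙ {ω | euclNorm (fz (XT Jᶜ ω) + fz (XT J ω)) < a ∧ XT Jᶜ ω ∈ FT Jᶜ}
      ≤ ENNReal.ofReal S * ℙ (XT Jᶜ ⁻¹' FT Jᶜ) :=
    core_decoupling (XT Jᶜ) (XT J) (hXTmeas Jᶜ) (hXTmeas J) hXY.symm fz fz hfzmeas hfzmeas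
      (FT Jᶜ) (hFTmeas Jᶜ) a S hboundJ
  -- FT preimages inside the Bkap event
  have hsubG : ∀ T : Finset (Fin d), XT T ⁻¹' FT T ⊆ {ω | b / 2 ≤ Bkap κ (W ω)} := by
    intro T ω hω
    have h1 := (hFTiff T ω).mp hω
    exact le_trans h1 (BJ_le_Bkap hκ1 T (W ω))
  set G : Set Ω := {ω | b / 2 ≤ Bkap κ (W ω)} with hG
  -- combine in ℝ≥0∞
  have hchain : ℙ {ω | euclNorm ((W ω).mulVec z) < a ∧ b < Bkap (κ ^ 2) (W ω)}
      ≤ ENNReal.ofReal S * ℙ G + ENNReal.ofReal S * ℙ G := by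
    calc ℙ {ω | euclNorm ((W ω).mulVec z) < a ∧ b < Bkap (κ ^ 2) (W ω)}
        ≤ ℙ ({ω | euclNorm (fz (XT J ω) + fz (XT Jᶜ ω)) < a ∧ XT J ω ∈ FT J}
            ∪ {ω | euclNorm (fz (XT Jᶜ ω) + fz (XT J ω)) < a ∧ XT Jᶜ ω ∈ FT Jᶜ}) :=
          measure_mono hincl
      _ ≤ ℙ {ω | euclNorm (fz (XT J ω) + fz (XT Jᶜ ω)) < a ∧ XT J ω ∈ FT J}
            + ℙ {ω | euclNorm (fz (XT Jᶜ ω) + fz (XT J ω)) < a ∧ XT Jᶜ ω ∈ FT Jᶜ} :=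
          measure_union_le _ _
      _ ≤ ENNReal.ofReal S * ℙ (XT J ⁻¹' FT J) + ENNReal.ofReal S * ℙ (XT Jᶜ ⁻¹' FT Jᶜ) :=
          add_le_add hcore1 hcore2
      _ ≤ ENNReal.ofReal S * ℙ G + ENNReal.ofReal S * ℙ G := by
          gcongr
          exacts [hsubG J, hsubG Jᶜ]
  -- pass to toReal
  have hfin : ENNReal.ofReal S * ℙ G + ENNReal.ofReal S * ℙ G ≠ ⊤ :=
    ENNReal.add_ne_top.mpr ⟨ENNReal.mul_ne_top ENNReal.ofReal_ne_top (measure_ne_top _ _),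
      ENNReal.mul_ne_top ENNReal.ofReal_ne_top (measure_ne_top _ _)⟩
  have := ENNReal.toReal_mono hfin hchain
  rw [ENNReal.toReal_add (ENNReal.mul_ne_top ENNReal.ofReal_ne_top (measure_ne_top _ _))
    (ENNReal.mul_ne_top ENNReal.ofReal_ne_top (measure_ne_top _ _)),
    ENNReal.toReal_mul, ENNReal.toReal_ofReal hS0] at this
  calc (ℙ {ω | euclNorm ((W ω).mulVec z) < a ∧ b < Bkap (κ ^ 2) (W ω)}).toReal
      ≤ S * (ℙ G).toReal + S * (ℙ G).toReal := this
    _ = 2 * (ℙ G).toReal * S := by ring
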